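/- (Uniform strategies and weak outbreak.) Let R_1⁰, …, R_N⁰ > 0 and let q : ℝ → ℝ be a positive function; set R_i(t) = q(t) R_i⁰ (a uniform strategy). Suppose S, E, I_1, …, I_N : ℝ → ℝ are differentiable, satisfy the time-dependent SEIR system with these R_i(t) for all t ≥ t_I, and I_i(t) ≥ 0 for all t ≥ t_I. Then the function U(t) = E(t) + Σ_i (R_i⁰/Σ_j x_j R_j⁰) I_i(t) satisfies U'(t) = (S(t) − S*(t)) q(t) Σ_i γ_i R_i⁰ I_i(t) for all t ≥ t_I, where S*(t) = (q(t) Σ_j x_j R_j⁰)^{-1}. Consequently, if S(t) ≤ S*(t) for all t > t_I (a uniform weak outbreak strategy), then U'(t) ≤ 0 for all t > t_I and U is non-increasing on (t_I, ∞). -/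

import Mathlib

/-- Uniform strategies and weak outbreak: under a uniform strategy
`Rᵢ(t) = q(t) Rᵢ⁰`, the function `U = E + Σᵢ (Rᵢ⁰/Σⱼ xⱼRⱼ⁰) Iᵢ` satisfies
`U'(t) = (S(t) − S*(t)) q(t) Σᵢ γᵢ Rᵢ⁰ Iᵢ(t)` with `S*(t) = (q(t) Σⱼ xⱼRⱼ⁰)⁻¹`;
consequently any uniform weak outbreak strategy (`S(t) ≤ S*(t)` for `t > t_I`)
gives `U' ≤ 0` after `t_I` and `U` non-increasing on `(t_I, ∞)`. -/
theorem stmt_14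
    (N : ℕ) [NeZero N]
    (σ : ℝ) (hσ : 0 < σ)
    (γ x : Fin N → ℝ)
    (hγ : ∀ i, 0 < γ i) (hx : ∀ i, 0 < x i)
    (hxsum : ∑ i, x i = 1)
    (R0 : Fin N → ℝ) (hR0 : ∀ i, 0 < R0 i)
    (q : ℝ → ℝ) (hq : ∀ t, 0 < q t)
    (tI : ℝ)
    (S E : ℝ → ℝ) (I : Fin N → ℝ → ℝ)
    (hS : ∀ t ≥ tI, HasDerivAt S (-(∑ i, γ i * (q t * R0 i) * I i t) * S t) t)
    (hE : ∀ t ≥ tI, HasDerivAt E ((∑ i, γ i * (q t * R0 i) * I i t) * S t - σ * E t) t)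
    (hI : ∀ i, ∀ t ≥ tI, HasDerivAt (I i) (x i * σ * E t - γ i * I i t) t)
    (hInn : ∀ i, ∀ t ≥ tI, 0 ≤ I i t) :
    (∀ t ≥ tI, HasDerivAt (fun s => E s + ∑ i, R0 i / (∑ j, x j * R0 j) * I i s)
      ((S t - (q t * ∑ j, x j * R0 j)⁻¹) * q t * ∑ i, γ i * R0 i * I i t) t) ∧
    ((∀ t > tI, S t ≤ (q t * ∑ j, x j * R0 j)⁻¹) →
      (∀ t > tI, deriv (fun s => E s + ∑ i, R0 i / (∑ j, x j * R0 j) * I i s) t ≤ 0) ∧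
      AntitoneOn (fun s => E s + ∑ i, R0 i / (∑ j, x j * R0 j) * I i s)
        (Set.Ioi tI)) := by
  set Sx : ℝ := ∑ j, x j * R0 j with hSx
  have hSgpos : 0 < Sx := Finset.sum_pos (fun j _ => mul_pos (hx j) (hR0 j)) ⟨⟨0, Nat.pos_of_ne_zero (NeZero.ne N)⟩, Finset.mem_univ _⟩
  have hSgne : Sx ≠ 0 := ne_of_gt hSgpos
  have key : ∀ t ≥ tI, HasDerivAt (fun s => E s + ∑ i, R0 i / Sx * I i s)
      ((S t - (q t * Sx)⁻¹) * q t * ∑ i, γ i * R0 i * I i t) t := by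
    intro t ht
    have h1 : HasDerivAt (fun s => ∑ i, R0 i / Sx * I i s)
        (∑ i, R0 i / Sx * (x i * σ * E t - γ i * I i t)) t :=
      HasDerivAt.fun_sum (fun i _ => (hI i t ht).const_mul _)
    have h2 := (hE t ht).fun_add h1
    refine h2.congr_deriv (Eq.symm ?_)
    have hcx : ∑ i, R0 i / Sx * (x i * σ * E t - γ i * I i t)
        = (∑ i, R0 i / Sx * (x i * σ * E t)) - ∑ i, R0 i / Sx * (γ i * I i t) := by
      rw [← Finset.sum_sub_distrib]; congr 1; ext i; ring
    have hsum1 : ∑ i, R0 i / Sx * (x i * σ * E t) = σ * E t := by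
      have : ∑ i, R0 i / Sx * (x i * σ * E t) = (∑ i, x i * R0 i) / Sx * (σ * E t) := by
        rw [Finset.sum_div, Finset.sum_mul]; congr 1; ext i; ring
      rw [this, ← hSx, div_self hSgne, one_mul]
    have hinvq : (q t * Sx)⁻¹ * q t * ∑ i, γ i * R0 i * I i t
        = ∑ i, R0 i / Sx * (γ i * I i t) := by
      rw [Finset.mul_sum]
      refine Finset.sum_congr rfl fun i _ => ?_
      field_simp [(hq t).ne', hSgne]
    have hS1 : S t * (q t * ∑ i, γ i * R0 i * I i t)
        = (∑ i, γ i * (q t * R0 i) * I i t) * S t := by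
      rw [Finset.mul_sum, Finset.sum_mul]
      rw [Finset.mul_sum]; congr 1; ext i; ring
    rw [hcx, hsum1, sub_mul, sub_mul, hinvq]
    linear_combination hS1
  refine ⟨key, fun hweak => ?_⟩
  have hderiv : ∀ t > tI, deriv (fun s => E s + ∑ i, R0 i / Sx * I i s) t ≤ 0 := by
    intro t ht
    rw [(key t ht.le).deriv]
    have hsumnn : 0 ≤ ∑ i, γ i * R0 i * I i t :=
      Finset.sum_nonneg fun i _ => mul_nonneg (mul_nonneg (hγ i).le (hR0 i).le) (hInn i t ht.le)
    have : S t - (q t * Sx)⁻¹ ≤ 0 := sub_nonpos.2 (hweak t ht)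
    exact mul_nonpos_of_nonpos_of_nonneg (mul_nonpos_of_nonpos_of_nonneg this (hq t).le) hsumnn
  refine ⟨hderiv, ?_⟩
  have hdiff : ∀ t ∈ interior (Set.Ioi tI),
      DifferentiableAt ℝ (fun s => E s + ∑ i, R0 i / Sx * I i s) t := by
    intro t ht
    rw [interior_Ioi] at ht
    exact (key t (le_of_lt ht)).differentiableAt
  apply antitoneOn_of_deriv_nonpos (convex_Ioi tI)
  · exact fun t ht => (hdiff t (by rwa [interior_Ioi])).continuousAt.continuousWithinAt
  · exact fun t ht => (hdiff t ht).differentiableWithinAt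
  · intro t ht; rw [interior_Ioi] at ht; exact hderiv t ht
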